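/- Let Γ be a commutative thick weakly distance-regular digraph with p^{(2,q-2)}_{(1,q-1),(1,q-1)} = m > 0. Then for every l with 1 ≤ l ≤ q-1, the product Γ_{1,q-1}^l equals the singleton {Γ_{l,q-l}}; in particular any path of length l consisting of arcs of type (1,q-1) joins vertices at two-way distance (l, q-l). -/

import Mathlib

/-!
Common framework: commutative thick weakly distance-regular digraphs.
-/

variable {V : Type*}

/-- There is a directed walk of length `n` from `x` to `y`. -/
def HasWalk (adj : V → V → Prop) (x y : V) (n : ℕ) : Prop :=
  ∃ f : ℕ → V, f 0 = x ∧ f n = y ∧ ∀ i < n, adj (f i) (f (i + 1))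

/-- Directed distance `∂(x,y)`. -/
noncomputable def ddist (adj : V → V → Prop) (x y : V) : ℕ :=
  sInf {n | HasWalk adj x y n}

/-- Two-way distance `∂̃(x,y) = (∂(x,y), ∂(y,x))`. -/
noncomputable def tdist (adj : V → V → Prop) (x y : V) : ℕ × ℕ :=
  (ddist adj x y, ddist adj y x)

/-- The pair `i` is an attained two-way distance, i.e. `i ∈ ∂̃(Γ)`. -/
def Attained (adj : V → V → Prop) (i : ℕ × ℕ) : Prop :=
  ∃ x y : V, tdist adj x y = i

/-- Intersection number `p^h_{i,j}`: for attained `h` it is the common cardinality of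
`{z | ∂̃(x,z) = i, ∂̃(z,y) = j}` over pairs with `∂̃(x,y) = h` (and `0` otherwise). -/
noncomputable def pnum (adj : V → V → Prop) (h i j : ℕ × ℕ) : ℕ :=
  sSup {n | ∃ x y : V, tdist adj x y = h ∧
    n = Set.ncard {z : V | tdist adj x z = i ∧ tdist adj z y = j}}

/-- Valency `k_i = |Γ_i(x)|`. -/
noncomputable def kval (adj : V → V → Prop) (i : ℕ × ℕ) : ℕ :=
  pnum adj (0, 0) i i.swap

/-- Adjacency of the subdigraph `Δ_J`: arcs of type `(1, t-1)` for `t ∈ J`. -/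
def deltaAdj (adj : V → V → Prop) (J : Set ℕ) (u v : V) : Prop :=
  ∃ t ∈ J, tdist adj u v = (1, t - 1)

/-- A circuit of length `s`. -/
def IsCircuit (adj : V → V → Prop) (s : ℕ) (f : ℕ → V) : Prop :=
  0 < s ∧ f s = f 0 ∧ ∀ i < s, adj (f i) (f (i + 1))

/-- Strongly connected. -/
def IsStrong (adj : V → V → Prop) : Prop :=
  ∀ x y : V, ∃ n, HasWalk adj x y n

/-- Weakly distance-regular: the intersection numbers are well defined. -/
def IsWDR (adj : V → V → Prop) : Prop :=
  ∀ (i j : ℕ × ℕ) (x y x' y' : V), tdist adj x y = tdist adj x' y' →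
    Set.ncard {z : V | tdist adj x z = i ∧ tdist adj z y = j}
      = Set.ncard {z : V | tdist adj x' z = i ∧ tdist adj z y' = j}

/-- Thick: `p^h_{i,i}, p^h_{i,i*} ∈ {0, k_i}`. -/
def IsThick (adj : V → V → Prop) : Prop :=
  ∀ h i : ℕ × ℕ,
    (pnum adj h i i = 0 ∨ pnum adj h i i = kval adj i) ∧
    (pnum adj h i i.swap = 0 ∨ pnum adj h i i.swap = kval adj i)

/-- A thick weakly distance-regular digraph (as a property of an adjacency relation). -/
def IsWDRThick (adj : V → V → Prop) : Prop :=
  IsStrong adj ∧ IsWDR adj ∧ IsThick adj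

/-- A commutative thick weakly distance-regular digraph. -/
structure CTWDR (V : Type*) [Fintype V] where
  adj : V → V → Prop
  loopless : ∀ v, ¬ adj v v
  strong : IsStrong adj
  wdr : IsWDR adj
  comm : ∀ (i j : ℕ × ℕ) (x y : V),
    Set.ncard {z : V | tdist adj x z = i ∧ tdist adj z y = j}
      = Set.ncard {z : V | tdist adj x z = j ∧ tdist adj z y = i}
  thick : IsThick adj

namespace CTWDR

variable {V : Type*} [Fintype V] (G : CTWDR V)

/-- Product `EF` of two sets of relations (relations identified with two-way distances). -/
def prodS (E F : Set (ℕ × ℕ)) : Set (ℕ × ℕ) :=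
  {h | ∃ i ∈ E, ∃ j ∈ F, pnum G.adj h i j ≠ 0}

/-- Powers `Γ_i^l` (with `Γ_i^0 = {Γ_{(0,0)}}` and `Γ_i^1 = {Γ_i}`). -/
def pow (i : ℕ × ℕ) : ℕ → Set (ℕ × ℕ)
  | 0 => {(0, 0)}
  | 1 => {i}
  | n + 2 => G.prodS (pow i (n + 1)) {i}

/-- The pair `(1, s-1)` is pure: every circuit of length `s` containing an arc of type
`(1, s-1)` consists of arcs of type `(1, s-1)`. -/
def Pure (s : ℕ) : Prop :=
  ∀ f : ℕ → V, IsCircuit G.adj s f →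
    (∃ i < s, tdist G.adj (f i) (f (i + 1)) = (1, s - 1)) →
    ∀ i < s, tdist G.adj (f i) (f (i + 1)) = (1, s - 1)

/-- `(1, s-1)` is mixed. -/
def Mixed (s : ℕ) : Prop := ¬ G.Pure s

/-- Configuration `C(q)` exists. -/
def Cexists (q : ℕ) : Prop :=
  pnum G.adj (1, q - 2) (1, q - 1) (1, q - 1) ≠ 0 ∧ G.Pure (q - 1)

/-- Configuration `D(q)` exists. -/
def Dexists (q : ℕ) : Prop :=
  pnum G.adj (1, q - 1) (1, q - 2) (q - 2, 1) ≠ 0 ∧ G.Pure (q - 1)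

/-- A closed set of relations: `Γ_{i*}Γ_j ⊆ F` for all `i, j ∈ F`. -/
def Closed (F : Set (ℕ × ℕ)) : Prop :=
  ∀ i ∈ F, ∀ j ∈ F, G.prodS {i.swap} {j} ⊆ F

/-- The minimal closed set `⟨F⟩` containing `F`. -/
def genClosed (F : Set (ℕ × ℕ)) : Set (ℕ × ℕ) :=
  ⋂₀ {C | F ⊆ C ∧ G.Closed C}

/-- The block `F_J(x)` of the closed set generated by `{Γ_{1,t-1}}_{t ∈ J}`. -/
def block (J : Set ℕ) (x : V) : Set V :=
  {y | tdist G.adj x y ∈ G.genClosed {i | ∃ t ∈ J, i = (1, t - 1)}}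

end CTWDR

section Basics

variable {V : Type*}

lemma hasWalk_zero (adj : V → V → Prop) (x : V) : HasWalk adj x x 0 :=
  ⟨fun _ => x, rfl, rfl, fun i h => absurd h (by omega)⟩

lemma eq_of_hasWalk_zero {adj : V → V → Prop} {x y : V} (h : HasWalk adj x y 0) : x = y := by
  obtain ⟨f, h0, hn, _⟩ := h
  rw [← h0, hn]

lemma hasWalk_one {adj : V → V → Prop} {x y : V} (h : adj x y) : HasWalk adj x y 1 := by
  refine ⟨fun t => if t = 0 then x else y, by simp, by simp, ?_⟩
  intro i hi
  have : i = 0 := by omega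
  simp [this, h]

lemma adj_of_hasWalk_one {adj : V → V → Prop} {x y : V} (h : HasWalk adj x y 1) : adj x y := by
  obtain ⟨f, h0, hn, ha⟩ := h
  have := ha 0 (by omega)
  rwa [h0, hn] at this

lemma hasWalk_append {adj : V → V → Prop} {x y z : V} {m n : ℕ}
    (h1 : HasWalk adj x y m) (h2 : HasWalk adj y z n) : HasWalk adj x z (m + n) := by
  obtain ⟨f, hf0, hfm, hfa⟩ := h1
  obtain ⟨g, hg0, hgn, hga⟩ := h2
  refine ⟨fun t => if t < m then f t else g (t - m), ?_, ?_, ?_⟩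
  · by_cases h : 0 < m
    · simp [h, hf0]
    · have hm0 : m = 0 := by omega
      have : x = y := by rw [← hf0, ← hfm, hm0]
      simp [hm0, hg0, this]
  · have : ¬ (m + n < m) := by omega
    simp only [this, if_false]
    rw [show m + n - m = n by omega, hgn]
  · intro t ht
    by_cases h1 : t + 1 < m
    · have h2 : t < m := by omega
      simp only [h1, h2, if_true]
      exact hfa t (by omega)
    · by_cases h3 : t < m
      · have h4 : t + 1 = m := by omega
        have : ¬ (t + 1 < m) := by omega
        simp only [h3, this, if_true, if_false]
        rw [show t + 1 - m = 0 by omega, hg0, ← hfm, ← h4]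
        exact hfa t (by omega)
      · have h5 : ¬ (t + 1 < m) := by omega
        simp only [h3, h5, if_false]
        rw [show t + 1 - m = (t - m) + 1 by omega]
        exact hga (t - m) (by omega)

lemma ddist_le_of_walk {adj : V → V → Prop} {x y : V} {n : ℕ} (h : HasWalk adj x y n) :
    ddist adj x y ≤ n :=
  Nat.sInf_le h

lemma ddist_self (adj : V → V → Prop) (x : V) : ddist adj x x = 0 :=
  Nat.eq_zero_of_le_zero (ddist_le_of_walk (hasWalk_zero adj x))

lemma hasWalk_ddist {adj : V → V → Prop} (hs : IsStrong adj) (x y : V) :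
    HasWalk adj x y (ddist adj x y) :=
  Nat.sInf_mem (hs x y)

lemma eq_of_ddist_zero {adj : V → V → Prop} (hs : IsStrong adj) {x y : V}
    (h : ddist adj x y = 0) : x = y := by
  have := hasWalk_ddist hs x y
  rw [h] at this
  exact eq_of_hasWalk_zero this

lemma ddist_triangle {adj : V → V → Prop} (hs : IsStrong adj) (x y z : V) :
    ddist adj x z ≤ ddist adj x y + ddist adj y z :=
  ddist_le_of_walk (hasWalk_append (hasWalk_ddist hs x y) (hasWalk_ddist hs y z))

lemma adj_of_ddist_one {adj : V → V → Prop} (hs : IsStrong adj) {x y : V}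
    (h : ddist adj x y = 1) : adj x y := by
  have := hasWalk_ddist hs x y
  rw [h] at this
  exact adj_of_hasWalk_one this

lemma ddist_le_one_of_adj {adj : V → V → Prop} {x y : V} (h : adj x y) : ddist adj x y ≤ 1 :=
  ddist_le_of_walk (hasWalk_one h)

lemma tdist_rev (adj : V → V → Prop) (x y : V) : tdist adj y x = (tdist adj x y).swap := rfl

lemma tdist_self (adj : V → V → Prop) (x : V) : tdist adj x x = (0, 0) := by
  simp [tdist, ddist_self]

lemma ddist_along {adj : V → V → Prop} {g : ℕ → V} {N : ℕ}
    (h : ∀ j < N, adj (g j) (g (j + 1))) {a b : ℕ} (hab : a ≤ b) (hbN : b ≤ N) :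
    ddist adj (g a) (g b) ≤ b - a := by
  refine ddist_le_of_walk ⟨fun t => g (a + t), by simp, ?_, ?_⟩
  · show g (a + (b - a)) = g b
    rw [show a + (b - a) = b by omega]
  · intro t ht
    have h1 : a + t < N := by omega
    show adj (g (a + t)) (g (a + (t + 1)))
    rw [show a + (t + 1) = (a + t) + 1 by omega]
    exact h _ h1

end Basics
section Bridge

variable {V : Type*} [Fintype V] (G : CTWDR V)

lemma pnum_eq (x y : V) (i j : ℕ × ℕ) :
    pnum G.adj (tdist G.adj x y) i j
      = Set.ncard {z : V | tdist G.adj x z = i ∧ tdist G.adj z y = j} := by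
  have hset : {n | ∃ x' y' : V, tdist G.adj x' y' = tdist G.adj x y ∧
      n = Set.ncard {z : V | tdist G.adj x' z = i ∧ tdist G.adj z y' = j}}
      = {Set.ncard {z : V | tdist G.adj x z = i ∧ tdist G.adj z y = j}} := by
    ext n
    simp only [Set.mem_setOf_eq, Set.mem_singleton_iff]
    constructor
    · rintro ⟨x', y', he, rfl⟩
      exact G.wdr i j x' y' x y he
    · rintro rfl
      exact ⟨x, y, rfl, rfl⟩
  unfold pnum
  rw [hset, csSup_singleton]

lemma exists_of_pnum_ne_zero {hrel i j : ℕ × ℕ}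
    (h : pnum G.adj hrel i j ≠ 0) :
    ∃ x y : V, tdist G.adj x y = hrel ∧
      {z : V | tdist G.adj x z = i ∧ tdist G.adj z y = j}.Nonempty := by
  by_contra hc
  push_neg at hc
  apply h
  unfold pnum
  set S := {n | ∃ x y : V, tdist G.adj x y = hrel ∧
      n = Set.ncard {z : V | tdist G.adj x z = i ∧ tdist G.adj z y = j}} with hS
  have hz : ∀ n ∈ S, n = 0 := by
    rintro n ⟨x, y, hxy, rfl⟩
    rw [hc x y hxy, Set.ncard_empty]
  rcases Set.eq_empty_or_nonempty S with he | hne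
  · rw [he, csSup_empty]
    rfl
  · exact Nat.le_antisymm (csSup_le hne (fun n hn => le_of_eq (hz n hn))) (Nat.zero_le _)

lemma pnum_ne_zero_of_mem {x y z : V} {i j : ℕ × ℕ}
    (h1 : tdist G.adj x z = i) (h2 : tdist G.adj z y = j) :
    pnum G.adj (tdist G.adj x y) i j ≠ 0 := by
  rw [pnum_eq]
  have hne : {z : V | tdist G.adj x z = i ∧ tdist G.adj z y = j}.Nonempty := ⟨z, h1, h2⟩
  exact ((Set.ncard_pos (Set.toFinite _)).mpr hne).ne'

lemma ncard_Gi (v : V) (i : ℕ × ℕ) :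
    {z : V | tdist G.adj v z = i}.ncard = kval G.adj i := by
  have h0 : tdist G.adj v v = ((0 : ℕ), (0 : ℕ)) := tdist_self _ _
  have hsets : {z : V | tdist G.adj v z = i ∧ tdist G.adj z v = i.swap}
      = {z : V | tdist G.adj v z = i} := by
    ext z
    simp only [Set.mem_setOf_eq, and_iff_left_iff_imp]
    intro hz
    rw [tdist_rev, hz]
  unfold kval
  rw [← h0, pnum_eq, hsets]

end Bridge
section Full

variable {V : Type*} [Fintype V] {G : CTWDR V}

lemma fullset {a c : V} {i : ℕ × ℕ}
    (hnz : pnum G.adj (tdist G.adj a c) i i ≠ 0) :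
    {z : V | tdist G.adj a z = i ∧ tdist G.adj z c = i} = {z : V | tdist G.adj a z = i} := by
  rcases (G.thick (tdist G.adj a c) i).1 with h | h
  · exact absurd h hnz
  · apply Set.eq_of_subset_of_ncard_le (fun z hz => hz.1) _ (Set.toFinite _)
    rw [ncard_Gi, ← pnum_eq, h]

lemma L2 {w v v' z : V} {i : ℕ × ℕ} (hv : tdist G.adj w v = i) (hv' : tdist G.adj w v' = i)
    (hz : tdist G.adj v z = i) : tdist G.adj v' z = i := by
  have hnz : pnum G.adj (tdist G.adj w z) i i ≠ 0 := pnum_ne_zero_of_mem G hv hz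
  have hfull := fullset hnz
  have : v' ∈ {t : V | tdist G.adj w t = i ∧ tdist G.adj t z = i} := by
    rw [hfull]; exact hv'
  exact this.2

end Full

section Main

variable {V : Type*} [Fintype V] {G : CTWDR V} {q : ℕ}

/-- Abbreviation for the hypothesis. -/
def Hyp (G : CTWDR V) (q : ℕ) : Prop :=
  pnum G.adj (2, q - 2) (1, q - 1) (1, q - 1) ≠ 0

lemma Hyp.wit (h : Hyp G q) :
    ∃ x y : V, tdist G.adj x y = (2, q - 2) ∧
      ∃ z, tdist G.adj x z = (1, q - 1) ∧ tdist G.adj z y = (1, q - 1) := by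
  obtain ⟨x, y, hxy, ⟨z, hz⟩⟩ := exists_of_pnum_ne_zero G h
  exact ⟨x, y, hxy, z, hz.1, hz.2⟩

lemma Hyp.q3 (h : Hyp G q) : 3 ≤ q := by
  obtain ⟨x, y, hxy, z, hz1, hz2⟩ := h.wit
  by_contra hq
  push_neg at hq
  have h2 : q - 2 = 0 := by omega
  have hxy1 : ddist G.adj x y = 2 := congrArg Prod.fst hxy
  have hyx : ddist G.adj y x = 0 := by
    have := congrArg Prod.snd hxy
    simpa [h2, tdist] using this
  have : y = x := eq_of_ddist_zero G.strong hyx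
  rw [this, ddist_self] at hxy1
  omega

lemma Hyp.kpos (h : Hyp G q) : 0 < kval G.adj (1, q - 1) := by
  obtain ⟨x, y, hxy, z, hz1, hz2⟩ := h.wit
  rw [← ncard_Gi G x]
  exact (Set.ncard_pos (Set.toFinite _)).mpr ⟨z, hz1⟩

lemma Hyp.succ (h : Hyp G q) (v : V) : ∃ w, tdist G.adj v w = (1, q - 1) := by
  have := h.kpos
  rw [← ncard_Gi G v] at this
  obtain ⟨w, hw⟩ := (Set.ncard_pos (Set.toFinite _)).mp this
  exact ⟨w, hw⟩

end Main
section Circuit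

variable {V : Type*} [Fintype V] {G : CTWDR V} {q : ℕ}

lemma Hyp.circuit (h : Hyp G q) {a₀ a₁ : V} (ha : tdist G.adj a₀ a₁ = (1, q - 1)) :
    ∃ d : ℕ → V, d 0 = a₀ ∧ d 1 = a₁ ∧ d q = a₀ ∧
      ∀ j < q, tdist G.adj (d j) (d (j + 1)) = (1, q - 1) := by
  have hq3 := h.q3
  obtain ⟨x, y, hxy, z, hz1, hz2⟩ := h.wit
  -- transfer the (2,q-2) configuration to the arc (a₀, a₁)
  have hyz : tdist G.adj y z = ((q - 1 : ℕ), 1) := by rw [tdist_rev, hz2, Prod.swap_prod_mk]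
  have htrans : pnum G.adj (tdist G.adj a₀ a₁) (2, q - 2) ((q - 1 : ℕ), 1) ≠ 0 := by
    rw [ha, ← hz1]
    exact pnum_ne_zero_of_mem G hxy hyz
  rw [pnum_eq] at htrans
  obtain ⟨v, hv2, hva⟩ := Set.nonempty_of_ncard_ne_zero htrans
  have ha1v : tdist G.adj a₁ v = (1, q - 1) := by
    rw [tdist_rev, hva, Prod.swap_prod_mk]
  -- shortest return path from v to a₀
  have hdva : ddist G.adj v a₀ = q - 2 := congrArg Prod.snd hv2
  have hwalk : HasWalk G.adj v a₀ (q - 2) := by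
    rw [← hdva]; exact hasWalk_ddist G.strong v a₀
  obtain ⟨f, hf0, hfq, hfa⟩ := hwalk
  -- the circuit
  set d : ℕ → V := fun j => match j with
    | 0 => a₀
    | 1 => a₁
    | (n + 2) => f n with hd
  have hd0 : d 0 = a₀ := rfl
  have hd1 : d 1 = a₁ := rfl
  have hd2 : d 2 = v := hf0
  have hdq : d q = a₀ := by
    obtain ⟨n, rfl⟩ : ∃ n, q = n + 2 := ⟨q - 2, by omega⟩
    show f n = a₀
    rw [show n = n + 2 - 2 by omega] at hfq ⊢
    exact hfq
  have hadj01 : G.adj a₀ a₁ := adj_of_ddist_one G.strong (congrArg Prod.fst ha)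
  have hadj1v : G.adj a₁ v := adj_of_ddist_one G.strong (congrArg Prod.fst ha1v)
  have adjd : ∀ j < q, G.adj (d j) (d (j + 1)) := by
    intro j hj
    match j with
    | 0 => exact hadj01
    | 1 => show G.adj a₁ (f 0); rw [hf0]; exact hadj1v
    | (n + 2) => exact hfa n (by omega)
  -- purity induction
  have P0 : tdist G.adj (d 0) (d 1) = (1, q - 1) := ha
  have P1 : tdist G.adj (d 1) (d 2) = (1, q - 1) := by rw [hd1, hd2]; exact ha1v
  have step : ∀ a, a + 3 ≤ q →
      tdist G.adj (d a) (d (a + 1)) = (1, q - 1) →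
      tdist G.adj (d (a + 1)) (d (a + 2)) = (1, q - 1) →
      tdist G.adj (d (a + 2)) (d (a + 3)) = (1, q - 1) := by
    intro a haq Pa Pa1
    have hbp : ddist G.adj (d (a + 1)) (d a) = q - 1 := congrArg Prod.snd Pa
    have hbc : ddist G.adj (d (a + 2)) (d (a + 1)) = q - 1 := congrArg Prod.snd Pa1
    have t1 : ddist G.adj (d (a + 3)) (d q) ≤ q - (a + 3) :=
      ddist_along (a := a + 3) (b := q) adjd (by omega) (le_refl q)
    have t2 : ddist G.adj (d 0) (d (a + 1)) ≤ a + 1 := by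
      have := ddist_along (a := 0) (b := a + 1) adjd (Nat.zero_le (a + 1)) (by omega)
      simpa using this
    have t3 : ddist G.adj (d 0) (d a) ≤ a := by
      have := ddist_along (a := 0) (b := a) adjd (Nat.zero_le a) (by omega)
      simpa using this
    rw [hdq, ← hd0] at t1
    have tri1 : ddist G.adj (d (a + 3)) (d (a + 1)) ≤ q - 2 := by
      have := ddist_triangle G.strong (d (a + 3)) (d 0) (d (a + 1))
      omega
    have tri2 : ddist G.adj (d (a + 3)) (d a) ≤ q - 3 := by
      have := ddist_triangle G.strong (d (a + 3)) (d 0) (d a)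
      omega
    have hstep23 : ddist G.adj (d (a + 2)) (d (a + 3)) ≤ 1 :=
      ddist_le_one_of_adj (adjd (a + 2) (by omega))
    have low1 : q - 2 ≤ ddist G.adj (d (a + 3)) (d (a + 1)) := by
      have := ddist_triangle G.strong (d (a + 2)) (d (a + 3)) (d (a + 1))
      omega
    have up2 : ddist G.adj (d (a + 1)) (d (a + 3)) ≤ 2 := by
      have := ddist_along (a := a + 1) (b := a + 3) adjd (by omega) (by omega)
      omega
    have low2 : 2 ≤ ddist G.adj (d (a + 1)) (d (a + 3)) := by
      have := ddist_triangle G.strong (d (a + 1)) (d (a + 3)) (d a)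
      omega
    have chord : tdist G.adj (d (a + 1)) (d (a + 3)) = (2, q - 2) := by
      unfold tdist
      rw [show ddist G.adj (d (a + 1)) (d (a + 3)) = 2 by omega,
        show ddist G.adj (d (a + 3)) (d (a + 1)) = q - 2 by omega]
    have hnz : pnum G.adj (tdist G.adj (d (a + 1)) (d (a + 3))) (1, q - 1) (1, q - 1) ≠ 0 := by
      rw [chord]; exact h
    have hfull := fullset hnz
    have hmem : d (a + 2) ∈ {t : V | tdist G.adj (d (a + 1)) t = (1, q - 1) ∧
        tdist G.adj t (d (a + 3)) = (1, q - 1)} := by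
      rw [hfull]; exact Pa1
    exact hmem.2
  have allP : ∀ t, t < q → tdist G.adj (d t) (d (t + 1)) = (1, q - 1) := by
    intro t
    induction t using Nat.strong_induction_on with
    | _ t ih =>
      match t with
      | 0 => exact fun _ => P0
      | 1 => exact fun _ => P1
      | (a + 2) =>
        intro hlt
        exact step a (by omega) (ih a (by omega) (by omega)) (ih (a + 1) (by omega) (by omega))
  exact ⟨d, hd0, hd1, hdq, allP⟩

end Circuit
section KeyA

variable {V : Type*} [Fintype V] {G : CTWDR V} {q : ℕ}

lemma Hyp.keyA (h : Hyp G q) {L : ℕ} (hL1 : 1 ≤ L) (hLq : L ≤ q - 1) (u : ℕ → V)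
    (hu : ∀ j < L, tdist G.adj (u j) (u (j + 1)) = (1, q - 1)) :
    tdist G.adj (u 0) (u L) = (L, q - L) := by
  have hq3 := h.q3
  obtain ⟨d, hd0, hd1, hdq, hdarc⟩ := h.circuit (hu 0 (by omega))
  have chain : ∀ j, 1 ≤ j → j ≤ L → ∀ z,
      (tdist G.adj (u j) z = (1, q - 1) ↔ tdist G.adj (d j) z = (1, q - 1)) := by
    intro j hj1
    induction j, hj1 using Nat.le_induction with
    | base => intro _ z; rw [hd1]
    | succ j hj ih =>
      intro hjL z
      have ihj := ih (by omega)
      have hu_arc := hu j (by omega)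
      have hd_arc := hdarc j (by omega)
      have hud : tdist G.adj (u j) (d (j + 1)) = (1, q - 1) := (ihj (d (j + 1))).mpr hd_arc
      constructor
      · intro hz; exact L2 hu_arc hud hz
      · intro hz; exact L2 hud hu_arc hz
  have harcL := hdarc L (by omega)
  have htL : tdist G.adj (u L) (d (L + 1)) = (1, q - 1) :=
    (chain L hL1 (le_refl L) (d (L + 1))).mpr harcL
  have adjd : ∀ j < q, G.adj (d j) (d (j + 1)) := fun j hj =>
    adj_of_ddist_one G.strong (congrArg Prod.fst (hdarc j hj))
  have adju : ∀ j < L, G.adj (u j) (u (j + 1)) := fun j hj =>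
    adj_of_ddist_one G.strong (congrArg Prod.fst (hu j hj))
  have b1 : ddist G.adj (u L) (d (L + 1)) = 1 := congrArg Prod.fst htL
  have b2 : ddist G.adj (d (L + 1)) (u L) = q - 1 := congrArg Prod.snd htL
  have b3 : ddist G.adj (d (L + 1)) (d q) ≤ q - (L + 1) :=
    ddist_along (a := L + 1) (b := q) adjd (by omega) (le_refl q)
  rw [hdq] at b3
  have up_back : ddist G.adj (u L) (u 0) ≤ q - L := by
    have := ddist_triangle G.strong (u L) (d (L + 1)) (u 0)
    omega
  have walk_u : ddist G.adj (u 1) (u L) ≤ L - 1 := by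
    have := ddist_along (a := 1) (b := L) adju hL1 (le_refl L)
    omega
  have harc0 : ddist G.adj (u 1) (u 0) = q - 1 := congrArg Prod.snd (hu 0 (by omega))
  have low_back : q - L ≤ ddist G.adj (u L) (u 0) := by
    have := ddist_triangle G.strong (u 1) (u L) (u 0)
    omega
  have up_fwd : ddist G.adj (u 0) (u L) ≤ L := by
    have := ddist_along (a := 0) (b := L) adju (Nat.zero_le L) (le_refl L)
    simpa using this
  have low_fwd : L ≤ ddist G.adj (u 0) (u L) := by
    have := ddist_triangle G.strong (d (L + 1)) (u 0) (u L)
    omega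
  unfold tdist
  rw [show ddist G.adj (u 0) (u L) = L by omega,
    show ddist G.adj (u L) (u 0) = q - L by omega]

end KeyA
section Realize

variable {V : Type*} [Fintype V] {G : CTWDR V} {q : ℕ}

lemma Hyp.ipath (h : Hyp G q) (v : V) :
    ∃ u : ℕ → V, u 0 = v ∧ ∀ j, tdist G.adj (u j) (u (j + 1)) = (1, q - 1) := by
  choose F hF using h.succ
  refine ⟨fun t => F^[t] v, rfl, fun j => ?_⟩
  show tdist G.adj (F^[j] v) (F^[j + 1] v) = (1, q - 1)
  rw [Function.iterate_succ_apply']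
  exact hF _

lemma Hyp.real (h : Hyp G q) : ∀ L, 1 ≤ L → L ≤ q - 1 → ∀ x z : V,
    tdist G.adj x z = (L, q - L) →
    ∃ u : ℕ → V, u 0 = x ∧ u L = z ∧ ∀ j < L, tdist G.adj (u j) (u (j + 1)) = (1, q - 1) := by
  intro L hL1
  induction L, hL1 using Nat.le_induction with
  | base =>
    intro _ x z hxz
    refine ⟨fun t => if t = 0 then x else z, rfl, by norm_num, ?_⟩
    intro j hj
    have hj0 : j = 0 := by omega
    subst hj0
    simpa using hxz
  | succ L hL ih =>
    intro hLq x z hxz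
    obtain ⟨p, hp0, hparc⟩ := h.ipath x
    have hpA : tdist G.adj (p 0) (p (L + 1)) = (L + 1, q - (L + 1)) :=
      h.keyA (by omega) hLq p (fun j _ => hparc j)
    have hp1A : tdist G.adj (p 1) (p (L + 1)) = (L, q - L) := by
      have := h.keyA (L := L) hL (by omega) (fun t => p (t + 1)) (fun j _ => hparc (j + 1))
      exact this
    have hnz : pnum G.adj (tdist G.adj x z) (1, q - 1) (L, q - L) ≠ 0 := by
      rw [hxz, ← hpA]
      exact pnum_ne_zero_of_mem G (hparc 0) hp1A
    rw [pnum_eq] at hnz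
    obtain ⟨z₁, hz₁x, hz₁z⟩ := Set.nonempty_of_ncard_ne_zero hnz
    obtain ⟨u', hu'0, hu'L, hu'arc⟩ := ih (by omega) z₁ z hz₁z
    refine ⟨fun t => if t = 0 then x else u' (t - 1), rfl, ?_, ?_⟩
    · simp only [show L + 1 ≠ 0 by omega, if_false]
      rw [show L + 1 - 1 = L by omega]
      exact hu'L
    · intro j hj
      by_cases hj0 : j = 0
      · subst hj0
        simp only [if_pos rfl, show (1 : ℕ) ≠ 0 by omega, if_false]
        rw [show (1 : ℕ) - 1 = 0 by omega, hu'0]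
        exact hz₁x
      · simp only [hj0, if_false, show j + 1 ≠ 0 by omega]
        rw [show j + 1 - 1 = (j - 1) + 1 by omega]
        exact hu'arc (j - 1) (by omega)

lemma Hyp.pow_eq (h : Hyp G q) : ∀ L, 1 ≤ L → L ≤ q - 1 →
    G.pow (1, q - 1) L = {((L : ℕ), q - L)} := by
  intro L hL1
  induction L, hL1 using Nat.le_induction with
  | base => intro _; rfl
  | succ L hL ih =>
    intro hLq
    have ihL := ih (by omega)
    obtain ⟨n, rfl⟩ : ∃ n, L = n + 1 := ⟨L - 1, by omega⟩
    rw [show G.pow (1, q - 1) (n + 1 + 1) = G.prodS (G.pow (1, q - 1) (n + 1)) {(1, q - 1)}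
      from rfl, ihL]
    ext hrel
    simp only [CTWDR.prodS, Set.mem_setOf_eq, Set.mem_singleton_iff]
    constructor
    · rintro ⟨i', hi', j', hj', hne⟩
      rw [hi', hj'] at hne
      obtain ⟨x, y, hxy, ⟨z, hz1, hz2⟩⟩ := exists_of_pnum_ne_zero G hne
      obtain ⟨u, hu0, huL, huarc⟩ := h.real (n + 1) (by omega) (by omega) x z hz1
      set w : ℕ → V := fun t => if t ≤ n + 1 then u t else y with hw
      have hwarc : ∀ j < n + 2, tdist G.adj (w j) (w (j + 1)) = (1, q - 1) := by
        intro j hj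
        by_cases hjn : j + 1 ≤ n + 1
        · have hj1 : j ≤ n + 1 := by omega
          simp only [hw, if_pos hjn, if_pos hj1]
          exact huarc j (by omega)
        · have hj1 : j ≤ n + 1 := by omega
          have hj2 : j = n + 1 := by omega
          simp only [hw, if_pos hj1, if_neg hjn]
          rw [hj2, huL]
          exact hz2
      have hA := h.keyA (L := n + 2) (by omega) (by omega) w hwarc
      have hw0 : w 0 = x := by simp [hw, hu0]
      have hwend : w (n + 2) = y := by simp [hw]
      rw [hw0, hwend, hxy] at hA
      rw [← hA]
    · rintro rfl
      obtain ⟨x, -, -, -⟩ := h.wit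
      refine ⟨(n + 1, q - (n + 1)), rfl, (1, q - 1), rfl, ?_⟩
      obtain ⟨p, hp0, hparc⟩ := h.ipath x
      have h1 : tdist G.adj (p 0) (p (n + 2)) = (n + 2, q - (n + 2)) :=
        h.keyA (by omega) (by omega) p (fun j _ => hparc j)
      have h2 : tdist G.adj (p 0) (p (n + 1)) = (n + 1, q - (n + 1)) :=
        h.keyA (by omega) (by omega) p (fun j _ => hparc j)
      show pnum G.adj (n + 2, q - (n + 2)) (n + 1, q - (n + 1)) (1, q - 1) ≠ 0
      rw [← h1]
      exact pnum_ne_zero_of_mem G h2 (hparc (n + 1))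

end Realize
/-- Lemma 2.4: if `p^{(2,q-2)}_{(1,q-1),(1,q-1)} = m > 0`, then
`Γ_{1,q-1}^l = {Γ_{l,q-l}}` for `1 ≤ l ≤ q-1`; in particular any path of length `l`
of arcs of type `(1,q-1)` joins vertices at two-way distance `(l, q-l)`. -/
theorem stmt3 {V : Type*} [Fintype V] (G : CTWDR V) (q m : ℕ)
    (hm : pnum G.adj (2, q - 2) (1, q - 1) (1, q - 1) = m) (hm0 : 0 < m) :
    ∀ l, 1 ≤ l → l ≤ q - 1 →
      G.pow (1, q - 1) l = {(l, q - l)} ∧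
      ∀ f : ℕ → V, (∀ i < l, tdist G.adj (f i) (f (i + 1)) = (1, q - 1)) →
        tdist G.adj (f 0) (f l) = (l, q - l) := by
  have hH : Hyp G q := by unfold Hyp; rw [hm]; omega
  intro l hl1 hlq
  exact ⟨hH.pow_eq l hl1 hlq, fun f hf => hH.keyA hl1 hlq f hf⟩
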